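/- For every family {L_λ}_{λ∈Λ} of R-submodules of R^α (Λ an arbitrary index set) and every e ≥ 0, the bracket power of the intersection equals the intersection of the bracket powers: (⋂_{λ∈Λ} L_λ)^{[p^e]} = ⋂_{λ∈Λ} (L_λ)^{[p^e]}. -/

import Mathlib

/-- The bracket power `L^{[q]}` of a submodule `L ⊆ T^α`: the submodule generated by the
entrywise `q`-th powers `v^{[q]}` of the vectors `v ∈ L`. -/
def bracketPower {T : Type*} [CommRing T] {α : ℕ}
    (q : ℕ) (L : Submodule T (Fin α → T)) : Submodule T (Fin α → T) :=
  Submodule.span T ((fun v : Fin α → T => fun i => (v i) ^ q) '' (L : Set (Fin α → T)))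

set_option linter.unusedSectionVars false
set_option maxHeartbeats 1000000
open MvPolynomial

section Eps
variable {K : Type*} [Field K] (p : ℕ) [Fact p.Prime] [CharP K p] (e : ℕ)
variable (k : Subfield K) (hk : ∀ a : K, a ^ p ^ e ∈ k) (hk' : ∀ s : k, ∃ b : K, b ^ p ^ e = s)

noncomputable def root (s : k) : K := Classical.choose (hk' s)

lemma root_spec (s : k) : (root p e k hk' s) ^ p ^ e = (s : K) :=
  Classical.choose_spec (hk' s)

lemma root_unique {s : k} {b : K} (h : b ^ p ^ e = (s : K)) : root p e k hk' s = b := by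
  have h1 := root_spec p e k hk' s
  have hinj := (iterateFrobenius K p e).injective
  apply hinj
  rw [iterateFrobenius_def, iterateFrobenius_def, h1, h]

variable (bas : Module.Basis (Module.Basis.ofVectorSpaceIndex k K) k K)

noncomputable def eps (j : Module.Basis.ofVectorSpaceIndex k K) (a : K) : K :=
  root p e k hk' (bas.repr a j)

lemma eps_spec (j) (a : K) : (eps p e k hk' bas j a) ^ p ^ e = (bas.repr a j : K) :=
  root_spec p e k hk' _

lemma eps_zero (j) : eps p e k hk' bas j (0 : K) = 0 :=
  root_unique p e k hk' (by simp [zero_pow (pow_ne_zero e (Fact.out : p.Prime).ne_zero)])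

lemma eps_add (j) (a b : K) :
    eps p e k hk' bas j (a + b) = eps p e k hk' bas j a + eps p e k hk' bas j b := by
  refine root_unique p e k hk' ?_
  rw [add_pow_char_pow, eps_spec, eps_spec, map_add]
  simp

include hk in
lemma eps_pow_mul (j) (b a : K) :
    eps p e k hk' bas j (b ^ p ^ e * a) = b * eps p e k hk' bas j a := by
  refine root_unique p e k hk' ?_
  have : (⟨b ^ p ^ e, hk b⟩ : k) • a = b ^ p ^ e * a := rfl
  rw [← this, map_smul, mul_pow, eps_spec]
  simp [Finsupp.smul_apply]

lemma eps_support {j} {a : K} (h : eps p e k hk' bas j a ≠ 0) : j ∈ (bas.repr a).support := by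
  by_contra hj
  exact h (root_unique p e k hk'
    (by simp [Finsupp.notMem_support_iff.mp hj,
      zero_pow (pow_ne_zero e (Fact.out : p.Prime).ne_zero)]))

lemma sum_eps (a : K) :
    ∑ j ∈ (bas.repr a).support, (eps p e k hk' bas j a) ^ p ^ e * (bas j) = a := by
  conv_rhs => rw [← bas.linearCombination_repr a]
  rw [Finsupp.linearCombination_apply, Finsupp.sum]
  refine Finset.sum_congr rfl fun j _ => ?_
  rw [eps_spec]
  rfl

end Eps

section Exponents

variable {n : ℕ}

noncomputable def divq (q : ℕ) (μ : Fin n →₀ ℕ) : Fin n →₀ ℕ :=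
  μ.mapRange (· / q) (Nat.zero_div q)

noncomputable def modq (q : ℕ) (μ : Fin n →₀ ℕ) : Fin n →₀ ℕ :=
  μ.mapRange (· % q) (Nat.zero_mod q)

lemma modq_smul_add (q : ℕ) (ν μ : Fin n →₀ ℕ) : modq q (q • ν + μ) = modq q μ := by
  ext i
  simp only [modq, Finsupp.mapRange_apply, Finsupp.add_apply, Finsupp.smul_apply, smul_eq_mul]
  exact Nat.mul_add_mod q (ν i) (μ i)

lemma divq_smul_add {q : ℕ} (hq : 0 < q) (ν μ : Fin n →₀ ℕ) :
    divq q (q • ν + μ) = ν + divq q μ := by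
  ext i
  simp only [divq, Finsupp.mapRange_apply, Finsupp.add_apply, Finsupp.smul_apply, smul_eq_mul]
  rw [add_comm (q * ν i) (μ i), Nat.add_mul_div_left _ _ hq, add_comm]

lemma smul_divq_add_modq (q : ℕ) (μ : Fin n →₀ ℕ) : q • divq q μ + modq q μ = μ := by
  ext i
  simp only [divq, modq, Finsupp.mapRange_apply, Finsupp.add_apply, Finsupp.smul_apply,
    smul_eq_mul]
  exact Nat.div_add_mod (μ i) q

end Exponents

section E
variable {K : Type*} [Field K] (p : ℕ) [Fact p.Prime] [CharP K p] (e : ℕ)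
variable (k : Subfield K) (hk : ∀ a : K, a ^ p ^ e ∈ k) (hk' : ∀ s : k, ∃ b : K, b ^ p ^ e = s)
variable (bas : Module.Basis (Module.Basis.ofVectorSpaceIndex k K) k K)
variable {n : ℕ}

noncomputable def epsHom (j : Module.Basis.ofVectorSpaceIndex k K) : K →+ K :=
  AddMonoidHom.mk' (eps p e k hk' bas j) (eps_add p e k hk' bas j)

noncomputable def EE (i : (Fin n →₀ ℕ) × (Module.Basis.ofVectorSpaceIndex k K)) :
    MvPolynomial (Fin n) K →+ MvPolynomial (Fin n) K :=
  (Finsupp.liftAddHom fun μ =>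
    if modq (p ^ e) μ = i.1 then
      ((monomial (divq (p ^ e) μ)).toAddMonoidHom.comp (epsHom p e k hk' bas i.2))
    else 0).comp AddMonoidAlgebra.coeffAddEquiv.toAddMonoidHom

lemma EE_monomial (i) (μ : Fin n →₀ ℕ) (a : K) :
    EE p e k hk' bas i (monomial μ a) =
      if modq (p ^ e) μ = i.1 then monomial (divq (p ^ e) μ) (eps p e k hk' bas i.2 a)
      else 0 := by
  rw [← single_eq_monomial]
  show (Finsupp.liftAddHom _) (Finsupp.single μ a) = _
  rw [Finsupp.liftAddHom_apply_single]
  split <;> rfl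

include hk in
lemma EE_pow_mul (i) (g f : MvPolynomial (Fin n) K) :
    EE p e k hk' bas i (g ^ p ^ e * f) = g * EE p e k hk' bas i f := by
  induction f using MvPolynomial.induction_on' with
  | add f1 f2 ih1 ih2 => rw [mul_add, map_add, map_add, mul_add, ih1, ih2]
  | monomial μ a =>
    induction g using MvPolynomial.induction_on' with
    | add g1 g2 ih1 ih2 => rw [add_pow_char_pow, add_mul, map_add, ih1, ih2, add_mul]
    | monomial ν b =>
      rw [monomial_pow, monomial_mul, EE_monomial, EE_monomial,
        modq_smul_add, divq_smul_add (pow_pos (Fact.out : p.Prime).pos e),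
        eps_pow_mul p e k hk hk' bas, mul_ite, monomial_mul, mul_zero]

lemma exists_T (f : MvPolynomial (Fin n) K) :
    ∃ T : Finset ((Fin n →₀ ℕ) × (Module.Basis.ofVectorSpaceIndex k K)),
      ∀ T' : Finset ((Fin n →₀ ℕ) × (Module.Basis.ofVectorSpaceIndex k K)), T ⊆ T' →
        ∑ i ∈ T', (EE p e k hk' bas i f) ^ p ^ e * monomial i.1 (bas i.2) = f := by
  classical
  have hq : (p : ℕ) ^ e ≠ 0 := pow_ne_zero e (Fact.out : p.Prime).ne_zero
  induction f using MvPolynomial.induction_on' with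
  | add f1 f2 ih1 ih2 =>
    obtain ⟨T1, h1⟩ := ih1
    obtain ⟨T2, h2⟩ := ih2
    refine ⟨T1 ∪ T2, fun T' hT' => ?_⟩
    have : ∀ i ∈ T',
        (EE p e k hk' bas i (f1 + f2)) ^ p ^ e * monomial i.1 (bas i.2)
          = (EE p e k hk' bas i f1) ^ p ^ e * monomial i.1 (bas i.2)
            + (EE p e k hk' bas i f2) ^ p ^ e * monomial i.1 (bas i.2) := by
      intro i _
      rw [map_add, add_pow_char_pow, add_mul]
    rw [Finset.sum_congr rfl this, Finset.sum_add_distrib,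
      h1 T' (Finset.union_subset_left hT'), h2 T' (Finset.union_subset_right hT')]
  | monomial μ a =>
    refine ⟨{modq (p ^ e) μ} ×ˢ (bas.repr a).support, fun T' hT' => ?_⟩
    rw [← Finset.sum_subset hT' ?_]
    · rw [Finset.sum_product, Finset.sum_singleton]
      have : ∀ j ∈ (bas.repr a).support,
          (EE p e k hk' bas (modq (p ^ e) μ, j) (monomial μ a)) ^ p ^ e
              * monomial (modq (p ^ e) μ) (bas j)
            = monomial μ ((eps p e k hk' bas j a) ^ p ^ e * bas j) := by
        intro j _
        rw [EE_monomial, if_pos rfl, monomial_pow, monomial_mul, smul_divq_add_modq]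
      rw [Finset.sum_congr rfl this, ← map_sum, sum_eps]
    · intro i _ hi
      rw [Finset.mem_product, Finset.mem_singleton] at hi
      rw [EE_monomial]
      by_cases h1 : modq (p ^ e) μ = i.1
      · have h2 : i.2 ∉ (bas.repr a).support := by
          intro h2; exact hi ⟨h1.symm, h2⟩
        have : eps p e k hk' bas i.2 a = 0 := by
          by_contra h3; exact h2 (eps_support p e k hk' bas h3)
        rw [if_pos h1, this, map_zero, zero_pow hq, zero_mul]
      · rw [if_neg h1, zero_pow hq, zero_mul]

variable {α : ℕ}

include hk in
lemma EE_mem {L : Submodule (MvPolynomial (Fin n) K) (Fin α → MvPolynomial (Fin n) K)}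
    {v : Fin α → MvPolynomial (Fin n) K} (hv : v ∈ bracketPower (p ^ e) L)
    (r : MvPolynomial (Fin n) K) (i) :
    (fun t => EE p e k hk' bas i (r * v t)) ∈ L := by
  have H := Submodule.span_induction
    (p := fun x _ => ∀ r, (fun t => EE p e k hk' bas i (r * x t)) ∈ L)
    ?_ ?_ ?_ ?_ hv
  · exact H r
  · rintro x ⟨w, hw, rfl⟩ r
    have : (fun t => EE p e k hk' bas i (r * (fun s => w s ^ p ^ e) t))
        = (EE p e k hk' bas i r) • w := by
      funext t
      simp only [Pi.smul_apply, smul_eq_mul]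
      rw [mul_comm r, EE_pow_mul p e k hk hk' bas, mul_comm]
    rw [this]
    exact L.smul_mem _ hw
  · intro r
    have : (fun t => EE p e k hk' bas i (r * (0 : Fin α → MvPolynomial (Fin n) K) t))
        = (0 : Fin α → MvPolynomial (Fin n) K) := by
      funext t; simp
    rw [this]
    exact L.zero_mem
  · intro x y hx hy ihx ihy r
    have : (fun t => EE p e k hk' bas i (r * (x + y) t))
        = (fun t => EE p e k hk' bas i (r * x t)) + (fun t => EE p e k hk' bas i (r * y t)) := by
      funext t
      simp only [Pi.add_apply, mul_add, map_add]
    rw [this]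
    exact L.add_mem (ihx r) (ihy r)
  · intro c x hx ih r
    have : (fun t => EE p e k hk' bas i (r * (c • x) t))
        = (fun t => EE p e k hk' bas i ((r * c) * x t)) := by
      funext t
      simp only [Pi.smul_apply, smul_eq_mul, mul_assoc]
    rw [this]
    exact ih (r * c)

end E

/-- Over `R = K[x₁,…,xₙ]` with `K` a field of prime characteristic `p`,
for every family `{L_λ}_{λ ∈ Λ}` of submodules of `R^α` and every `e ≥ 0`, the bracket power
of the intersection equals the intersection of the bracket powers:
`(⋂_λ L_λ)^{[p^e]} = ⋂_λ (L_λ)^{[p^e]}`. -/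
theorem bracketPower_iInf
    {K : Type*} [Field K] {p n α : ℕ} (hp : p.Prime) [CharP K p]
    (Λ : Type*) (L : Λ → Submodule (MvPolynomial (Fin n) K) (Fin α → MvPolynomial (Fin n) K))
    (e : ℕ) :
    bracketPower (p ^ e) (⨅ l : Λ, L l) = ⨅ l : Λ, bracketPower (p ^ e) (L l) := by
  classical
  haveI := Fact.mk hp
  obtain ⟨k, hk, hk'⟩ : ∃ k : Subfield K,
      (∀ a : K, a ^ p ^ e ∈ k) ∧ (∀ s : k, ∃ b : K, b ^ p ^ e = (s : K)) := by
    refine ⟨(iterateFrobenius K p e).fieldRange, fun a => ⟨a, iterateFrobenius_def p e a⟩, ?_⟩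
    rintro ⟨s, b, rfl⟩
    exact ⟨b, (iterateFrobenius_def p e b).symm⟩
  set bas := Module.Basis.ofVectorSpace k K with hbas
  refine le_antisymm (le_iInf fun l => Submodule.span_mono (Set.image_mono ?_)) ?_
  · exact SetLike.coe_subset_coe.mpr (iInf_le _ l)
  · intro v hv
    rw [Submodule.mem_iInf] at hv
    choose T hT using fun t => exists_T p e k hk' bas (v t)
    set T' := Finset.univ.biUnion T with hT'
    have hrepr : v = ∑ i ∈ T',
        (monomial i.1 (bas i.2)) • (fun t => (EE p e k hk' bas i (v t)) ^ p ^ e) := by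
      funext t
      rw [Finset.sum_apply]
      have h1 := hT t T' (Finset.subset_biUnion_of_mem T (Finset.mem_univ t))
      conv_lhs => rw [← h1]
      refine Finset.sum_congr rfl fun i _ => ?_
      simp only [Pi.smul_apply, smul_eq_mul]
      ring
    rw [hrepr]
    refine Submodule.sum_mem _ fun i _ => Submodule.smul_mem _ _ ?_
    apply Submodule.subset_span
    refine ⟨fun t => EE p e k hk' bas i (v t), ?_, rfl⟩
    rw [SetLike.mem_coe, Submodule.mem_iInf]
    intro l
    have := EE_mem p e k hk hk' bas (hv l) 1 i
    simpa using this
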